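/- Suppose $P_0$ is atomic and $L$ is a linear subspace of $L_\infty(\Omega, \mathcal{A}, P_0)$ with $\overline{L - L_\infty^+} \cap L_\infty^+ = \{0\}$ (closure in the norm topology of $L_\infty$). Then there exists a finitely additive probability $P$ with $P \sim P_0$ and $E_P(X) = 0$ for all $X \in L$. -/

import Mathlib

open MeasureTheory Set

namespace FAP

variable {Ω : Type*}

/-- A finitely additive probability on the power set of `Ω`. -/
def IsFAP (P : Set Ω → ℝ) : Prop :=
  P univ = 1 ∧ (∀ A : Set Ω, 0 ≤ P A) ∧
    ∀ A B : Set Ω, Disjoint A B → P (A ∪ B) = P A + P B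

/-- A finitely additive probability on the σ-field of a measurable space `Ω`. -/
def IsFAPm [MeasurableSpace Ω] (P : Set Ω → ℝ) : Prop :=
  P univ = 1 ∧ (∀ A : Set Ω, MeasurableSet A → 0 ≤ P A) ∧
    ∀ A B : Set Ω, MeasurableSet A → MeasurableSet B → Disjoint A B →
      P (A ∪ B) = P A + P B

/-- The finitely additive integral of a bounded function `X` with respect to a
finitely additive probability `P`, defined via the layer-cake formula
(which agrees with the uniform-limit-of-simple-functions definition). -/
noncomputable def faIntegral (P : Set Ω → ℝ) (X : Ω → ℝ) : ℝ :=
  (∫ t in Ioi (0 : ℝ), P {ω | t < X ω}) -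
    (∫ t in Iio (0 : ℝ), (1 - P {ω | t < X ω}))

/-- `P` is absolutely continuous with respect to the (countably additive) measure `P₀`. -/
def AC [MeasurableSpace Ω] (P : Set Ω → ℝ) (P₀ : Measure Ω) : Prop :=
  ∀ A : Set Ω, MeasurableSet A → P₀ A = 0 → P A = 0

/-- `P` and `P₀` have the same null sets. -/
def EquivP [MeasurableSpace Ω] (P : Set Ω → ℝ) (P₀ : Measure Ω) : Prop :=
  ∀ A : Set Ω, MeasurableSet A → (P A = 0 ↔ P₀ A = 0)

/-- `P` is pure: the only countably additive measure `Γ` with `0 ≤ Γ ≤ P` is `Γ = 0`. -/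
def IsPure [MeasurableSpace Ω] (P : Set Ω → ℝ) : Prop :=
  ∀ Γ : Measure Ω, (∀ A : Set Ω, MeasurableSet A → Γ A ≤ ENNReal.ofReal (P A)) → Γ = 0

/-- The essential supremum `inf {a : P₀(X > a) = 0}` of a random variable `X`. -/
noncomputable def essSupR [MeasurableSpace Ω] (P₀ : Measure Ω) (X : Ω → ℝ) : ℝ :=
  sInf {a : ℝ | P₀ {ω | a < X ω} = 0}

end FAP

open FAP

set_option linter.unusedSectionVars false

namespace Stmt19Aux
variable {Ω : Type*} [MeasurableSpace Ω] (P₀ : Measure Ω) [IsProbabilityMeasure P₀]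

noncomputable def onE {B : Set Ω} (hB : MeasurableSet B) : Lp ℝ ⊤ P₀ :=
  indicatorConstLp ⊤ hB (measure_ne_top P₀ B) (1 : ℝ)

lemma onE_coe {B : Set Ω} (hB : MeasurableSet B) :
    ⇑(onE P₀ hB) =ᵐ[P₀] B.indicator (fun _ => (1:ℝ)) := indicatorConstLp_coeFn

lemma onE_nonneg {B : Set Ω} (hB : MeasurableSet B) :
    ∀ᵐ ω ∂P₀, 0 ≤ onE P₀ hB ω := by
  filter_upwards [onE_coe P₀ hB] with ω h
  rw [h]; exact Set.indicator_nonneg (fun _ _ => zero_le_one) ω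

lemma onE_congr {B C : Set Ω} (hB : MeasurableSet B) (hC : MeasurableSet C) (h : B = C) :
    onE P₀ hB = onE P₀ hC := by subst h; rfl

lemma onE_union {B C : Set Ω} (hB : MeasurableSet B) (hC : MeasurableSet C)
    (h : Disjoint B C) : onE P₀ (hB.union hC) = onE P₀ hB + onE P₀ hC :=
  indicatorConstLp_disjoint_union hB hC _ _ h 1

lemma onE_ae_eq {B C : Set Ω} (hB : MeasurableSet B) (hC : MeasurableSet C)
    (h : B =ᵐ[P₀] C) : onE P₀ hB = onE P₀ hC :=
  (indicatorConstLp_inj hB _ hC _ one_ne_zero).mpr h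

lemma onE_null {B : Set Ω} (hB : MeasurableSet B) (h : P₀ B = 0) : onE P₀ hB = 0 := by
  apply Lp.ext
  refine (onE_coe P₀ hB).trans ?_
  refine Filter.EventuallyEq.trans ?_ (Lp.coeFn_zero ℝ ⊤ P₀).symm
  have hb : ∀ᵐ ω ∂P₀, ω ∉ B := by
    rw [ae_iff]; simpa [not_not] using h
  filter_upwards [hb] with ω hω
  simp [Set.indicator_of_notMem hω]

lemma onE_compl {B : Set Ω} (hB : MeasurableSet B) :
    onE P₀ hB + onE P₀ hB.compl = onE P₀ MeasurableSet.univ := by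
  rw [← onE_union P₀ hB hB.compl disjoint_compl_right]
  exact onE_congr P₀ _ _ (Set.union_compl_self B)

lemma ae_abs_le (f : Lp ℝ ⊤ P₀) : ∀ᵐ ω ∂P₀, |f ω| ≤ ‖f‖ := by
  have h1 := enorm_ae_le_eLpNormEssSup (⇑f) P₀
  have h2 : eLpNormEssSup (⇑f) P₀ ≠ ⊤ := by
    have := Lp.eLpNorm_ne_top f; rwa [eLpNorm_exponent_top] at this
  have h3 : ‖f‖ = (eLpNormEssSup (⇑f) P₀).toReal := by
    rw [Lp.norm_def, eLpNorm_exponent_top]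
  filter_upwards [h1] with ω hω
  rw [h3]
  have := ENNReal.toReal_mono h2 hω
  simpa [Real.norm_eq_abs, toReal_enorm'] using this

lemma coeFn_sum {ι : Type*} {P₀ : Measure Ω} (s : Finset ι) (v : ι → Lp ℝ ⊤ P₀) :
    ⇑(∑ i ∈ s, v i) =ᵐ[P₀] fun ω => ∑ i ∈ s, v i ω := by
  classical
  induction s using Finset.induction_on with
  | empty => simp only [Finset.sum_empty]; exact Lp.coeFn_zero ℝ ⊤ P₀
  | insert _ _ hx ih =>
      rename_i x s'
      rw [Finset.sum_insert hx]
      refine (Lp.coeFn_add _ _).trans ?_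
      filter_upwards [ih] with ω hω
      simp only [Pi.add_apply, hω, Finset.sum_insert hx]

section Phi
variable {P₀ : Measure Ω} [IsProbabilityMeasure P₀] (φ : Lp ℝ ⊤ P₀ → ℝ)
  (hadd : ∀ a b, φ (a + b) = φ a + φ b)
  (hsmul : ∀ (c : ℝ) a, φ (c • a) = c * φ a)
  (hpos : ∀ a, (∀ᵐ ω ∂P₀, 0 ≤ a ω) → 0 ≤ φ a)

include hsmul in
lemma phi_zero : φ 0 = 0 := by
  have := hsmul 0 0; simpa using this

include hadd hsmul in
lemma phi_sub (a b : Lp ℝ ⊤ P₀) : φ (a - b) = φ a - φ b := by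
  have h1 := hadd (a - b) b
  simp only [sub_add_cancel] at h1
  linarith

include hadd hsmul hpos in
lemma phi_mono {a b : Lp ℝ ⊤ P₀} (h : ∀ᵐ ω ∂P₀, a ω ≤ b ω) : φ a ≤ φ b := by
  have h0 : 0 ≤ φ (b - a) := by
    refine hpos _ ?_
    filter_upwards [Lp.coeFn_sub b a, h] with ω h1 h2
    rw [h1]; simpa using h2
  rw [phi_sub φ hadd hsmul] at h0
  linarith

include hadd hsmul in
lemma phi_sum {ι : Type*} (s : Finset ι) (v : ι → Lp ℝ ⊤ P₀) :
    φ (∑ i ∈ s, v i) = ∑ i ∈ s, φ (v i) := by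
  classical
  induction s using Finset.induction_on with
  | empty => simpa using phi_zero φ hsmul
  | insert _ _ hx ih => rename_i x s'
                        rw [Finset.sum_insert hx, Finset.sum_insert hx, hadd, ih]

variable (hone : φ (onE P₀ MeasurableSet.univ) = 1)

lemma onE_univ_coe : ⇑(onE P₀ (MeasurableSet.univ : MeasurableSet (univ : Set Ω)))
    =ᵐ[P₀] fun _ => (1:ℝ) := by
  refine (onE_coe P₀ _).trans ?_
  filter_upwards with ω
  simp

include hadd hsmul hpos hone in
lemma phi_abs_le (a : Lp ℝ ⊤ P₀) : |φ a| ≤ ‖a‖ := by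
  have h1 : φ a ≤ ‖a‖ := by
    have := phi_mono φ hadd hsmul hpos (a := a) (b := ‖a‖ • onE P₀ MeasurableSet.univ) ?_
    · rwa [hsmul, hone, mul_one] at this
    · filter_upwards [ae_abs_le P₀ a, Lp.coeFn_smul ‖a‖ (onE P₀ MeasurableSet.univ),
        onE_univ_coe (P₀ := P₀)] with ω hω h2 h3
      rw [h2, Pi.smul_apply, h3]
      simp only [smul_eq_mul, mul_one]
      exact le_trans (le_abs_self _) hω
  have h2 : -‖a‖ ≤ φ a := by
    have := phi_mono φ hadd hsmul hpos (a := (-‖a‖) • onE P₀ MeasurableSet.univ) (b := a) ?_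
    · rwa [hsmul, hone, mul_one] at this
    · filter_upwards [ae_abs_le P₀ a, Lp.coeFn_smul (-‖a‖) (onE P₀ MeasurableSet.univ),
        onE_univ_coe (P₀ := P₀)] with ω hω h2 h3
      rw [h2, Pi.smul_apply, h3]
      simp only [smul_eq_mul, mul_one]
      exact le_trans (neg_le_neg hω) (neg_abs_le _) |>.trans (le_refl _) |> fun h => h
  exact abs_le.mpr ⟨h2, h1⟩

end Phi
section Core
variable {P₀ : Measure Ω} [IsProbabilityMeasure P₀]

open Classical in
noncomputable def Pm (φ : Lp ℝ ⊤ P₀ → ℝ) : Set Ω → ℝ :=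
  fun B => if h : MeasurableSet B then φ (onE P₀ h) else 0

lemma Pm_meas (φ : Lp ℝ ⊤ P₀ → ℝ) {B : Set Ω} (hB : MeasurableSet B) :
    Pm φ B = φ (onE P₀ hB) := dif_pos hB

variable (φ : Lp ℝ ⊤ P₀ → ℝ)
  (hadd : ∀ a b, φ (a + b) = φ a + φ b)
  (hsmul : ∀ (c : ℝ) a, φ (c • a) = c * φ a)
  (hpos : ∀ a, (∀ᵐ ω ∂P₀, 0 ≤ a ω) → 0 ≤ φ a)
  (hone : φ (onE P₀ MeasurableSet.univ) = 1)

include hadd hsmul hpos hone in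
set_option maxHeartbeats 2000000 in
theorem faIntegral_eq (f : Lp ℝ ⊤ P₀) : FAP.faIntegral (Pm φ) (⇑f) = φ f := by
  classical
  have hM'pos : (0:ℝ) < ‖f‖ + 1 := by positivity
  set M' : ℝ := ‖f‖ + 1 with hM'
  have hbd : ∀ᵐ ω ∂P₀, |f ω| ≤ ‖f‖ := ae_abs_le P₀ f
  have hFmeas : ∀ t : ℝ, MeasurableSet {ω | t < f ω} := fun t =>
    measurableSet_lt measurable_const (Lp.stronglyMeasurable f).measurable
  set F : ℝ → ℝ := fun t => Pm φ {ω | t < f ω} with hFdef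
  have hFeq : ∀ t, F t = φ (onE P₀ (hFmeas t)) := fun t => Pm_meas φ (hFmeas t)
  have hFanti : Antitone F := by
    intro s t hst
    rw [hFeq, hFeq]
    refine phi_mono φ hadd hsmul hpos ?_
    filter_upwards [onE_coe P₀ (hFmeas t), onE_coe P₀ (hFmeas s)] with ω h1 h2
    rw [h1, h2]
    refine Set.indicator_le_indicator_of_subset ?_ (fun _ => zero_le_one) ω
    intro ω' hω'
    exact lt_of_le_of_lt hst hω'
  have hF0 : ∀ t, 0 ≤ F t := by
    intro t; rw [hFeq]
    exact hpos _ (onE_nonneg P₀ _)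
  have hF1 : ∀ t, F t ≤ 1 := by
    intro t; rw [hFeq, ← hone]
    refine phi_mono φ hadd hsmul hpos ?_
    filter_upwards [onE_coe P₀ (hFmeas t), onE_univ_coe (P₀ := P₀)] with ω h1 h2
    rw [h1, h2]
    exact Set.indicator_le_self' (fun _ _ => zero_le_one) ω |>.trans (le_refl _)
  have hbd0 : P₀ {ω | ¬ |f ω| ≤ ‖f‖} = 0 := by
    simpa [ae_iff] using hbd
  have hFhi : ∀ t, ‖f‖ ≤ t → F t = 0 := by
    intro t ht
    have hnull : P₀ {ω | t < f ω} = 0 := by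
      refine measure_mono_null (fun ω hω => ?_) hbd0
      simp only [mem_setOf_eq, not_le] at hω ⊢
      exact lt_of_le_of_lt ht (lt_of_lt_of_le hω (le_abs_self _))
    rw [hFeq, onE_null P₀ _ hnull, phi_zero φ hsmul]
  have hFlo : ∀ t, t ≤ -M' → F t = 1 := by
    intro t ht
    have hnull : {ω | t < f ω} =ᵐ[P₀] (univ : Set Ω) := by
      rw [ae_eq_univ]
      refine measure_mono_null (fun ω hω => ?_) hbd0
      simp only [mem_compl_iff, mem_setOf_eq, not_lt] at hω
      simp only [mem_setOf_eq, not_le]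
      have h1 : f ω ≤ -M' := le_trans hω ht
      have h2 : -(f ω) ≤ |f ω| := neg_le_abs _
      rw [hM'] at h1
      linarith
    rw [hFeq, onE_ae_eq P₀ _ MeasurableSet.univ hnull, hone]
  -- integrability and reduction to interval integrals
  have hFint : ∀ a b : ℝ, IntervalIntegrable F MeasureTheory.volume a b := fun a b =>
    hFanti.intervalIntegrable
  have h1 : ∫ u in Ioi (0:ℝ), F u = ∫ u in (0:ℝ)..M', F u := by
    have e1 : ∫ u in Ioi (0:ℝ), F u = ∫ u in Ioi (0:ℝ), (Ioc (0:ℝ) M').indicator F u := by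
      refine setIntegral_congr_fun measurableSet_Ioi (fun u hu => ?_)
      by_cases h : u ≤ M'
      · rw [Set.indicator_of_mem (Set.mem_Ioc.mpr ⟨hu, h⟩)]
      · push_neg at h
        rw [Set.indicator_of_notMem (fun hmem => absurd hmem.2 (not_le.mpr h)),
          hFhi u (by rw [hM'] at h; linarith)]
    rw [e1, setIntegral_indicator measurableSet_Ioc,
      inter_eq_self_of_subset_right Ioc_subset_Ioi_self,
      intervalIntegral.integral_of_le hM'pos.le]
  have h2 : ∫ u in Iio (0:ℝ), (1 - F u) = ∫ u in (-M')..(0:ℝ), (1 - F u) := by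
    have e1 : ∫ u in Iio (0:ℝ), (1 - F u)
        = ∫ u in Iio (0:ℝ), (Ioo (-M') (0:ℝ)).indicator (fun u => 1 - F u) u := by
      refine setIntegral_congr_fun measurableSet_Iio (fun u hu => ?_)
      by_cases h : -M' < u
      · rw [Set.indicator_of_mem (Set.mem_Ioo.mpr ⟨h, hu⟩)]
      · push_neg at h
        rw [Set.indicator_of_notMem (fun hmem => absurd hmem.1 (not_lt.mpr h)),
          hFlo u h, sub_self]
    rw [e1, setIntegral_indicator measurableSet_Ioo,
      inter_eq_self_of_subset_right Ioo_subset_Iio_self,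
      intervalIntegral.integral_of_le (by linarith : -M' ≤ (0:ℝ)),
      integral_Ioc_eq_integral_Ioo]
  have h3 : ∫ u in (-M')..(0:ℝ), (1 - F u) = M' - ∫ u in (-M')..(0:ℝ), F u := by
    rw [intervalIntegral.integral_sub intervalIntegrable_const (hFint _ _)]
    simp
  have h4 : (∫ u in (-M')..(0:ℝ), F u) + ∫ u in (0:ℝ)..M', F u = ∫ u in (-M')..M', F u :=
    intervalIntegral.integral_add_adjacent_intervals (hFint _ _) (hFint _ _)
  -- the key approximation
  have key : ∀ n : ℕ, 1 ≤ n → |φ f + M' - ∫ u in (-M')..M', F u| ≤ 2 * M' / n := by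
    intro n hn
    have hnpos : (0:ℝ) < n := by exact_mod_cast hn
    set δ : ℝ := 2 * M' / n with hδ
    have hδpos : 0 < δ := by positivity
    set t : ℕ → ℝ := fun k => -M' + k * δ with htdef
    have hstep : ∀ k : ℕ, t (k+1) = t k + δ := by
      intro k; simp only [htdef]; push_cast; ring
    have htmono : Monotone t := by
      intro i j hij
      simp only [htdef]
      have hc : (i:ℝ) ≤ j := by exact_mod_cast hij
      nlinarith
    have ht0 : t 0 = -M' := by simp [htdef]
    have htn : t n = M' := by
      simp only [htdef, hδ]
      field_simp
      ring
    set g : Lp ℝ ⊤ P₀ := δ • ∑ k ∈ Finset.range n, onE P₀ (hFmeas (t (k+1))) with hg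
    have hφg : φ g = δ * ∑ k ∈ Finset.range n, F (t (k+1)) := by
      rw [hg, hsmul, phi_sum φ hadd hsmul]
      congr 1
      exact Finset.sum_congr rfl (fun k _ => (hFeq _).symm)
    have hcard : ∀ᵐ ω ∂P₀, g ω
        = δ * (((Finset.range n).filter (fun k => t (k+1) < f ω)).card : ℝ) := by
      have hs : ⇑(∑ k ∈ Finset.range n, onE P₀ (hFmeas (t (k+1)))) =ᵐ[P₀]
          fun ω => ∑ k ∈ Finset.range n, (onE P₀ (hFmeas (t (k+1)))) ω :=
        coeFn_sum _ _
      have hind : ∀ᵐ ω ∂P₀, ∀ k ∈ Finset.range n, (onE P₀ (hFmeas (t (k+1)))) ω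
          = ({ω' | t (k+1) < f ω'}).indicator (fun _ => (1:ℝ)) ω := by
        rw [Filter.eventually_all_finset]
        exact fun k _ => onE_coe P₀ _
      filter_upwards [Lp.coeFn_smul δ (∑ k ∈ Finset.range n, onE P₀ (hFmeas (t (k+1)))),
        hs, hind] with ω hω1 hω2 hω3
      rw [hg, hω1, Pi.smul_apply, hω2, smul_eq_mul]
      congr 1
      rw [Finset.sum_congr rfl hω3]
      have : ∀ k ∈ Finset.range n,
          ({ω' | t (k+1) < f ω'}).indicator (fun _ => (1:ℝ)) ω
            = if t (k+1) < f ω then (1:ℝ) else 0 := by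
        intro k _
        by_cases h : t (k+1) < f ω <;>
          simp [Set.indicator_apply, Set.mem_setOf_eq, h]
      rw [Finset.sum_congr rfl this, Finset.sum_boole]
    have hfbounds : ∀ᵐ ω ∂P₀, -M' < f ω ∧ f ω < M' := by
      filter_upwards [hbd] with ω hω
      rw [abs_le] at hω
      rw [hM']
      constructor <;> linarith [hω.1, hω.2]
    have hlow : ∀ᵐ ω ∂P₀, g ω ≤ f ω + M' := by
      filter_upwards [hcard, hfbounds] with ω hω hb
      rw [hω]
      set S := (Finset.range n).filter (fun k => t (k+1) < f ω) with hSdef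
      rcases S.eq_empty_or_nonempty with hS | hS
      · rw [hS]
        simp only [Finset.card_empty, Nat.cast_zero, mul_zero]
        linarith [hb.1]
      · set m := S.max' hS with hm
        have hmS : m ∈ S := S.max'_mem hS
        have h5 : t (m+1) < f ω := (Finset.mem_filter.mp hmS).2
        have h6 : S.card ≤ m + 1 := by
          have hsub : S ⊆ Finset.range (m+1) :=
            fun k hk => Finset.mem_range.mpr (Nat.lt_succ_of_le (S.le_max' k hk))
          simpa using Finset.card_le_card hsub
        have h7 : (S.card : ℝ) ≤ (m:ℝ) + 1 := by exact_mod_cast h6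
        have h8 : -M' + ((m:ℝ)+1) * δ < f ω := by
          have h5' := h5
          simp only [htdef] at h5'
          push_cast at h5'
          linarith
        nlinarith
    have hhigh : ∀ᵐ ω ∂P₀, f ω + M' ≤ g ω + δ := by
      filter_upwards [hcard, hfbounds] with ω hω hb
      rw [hω]
      set S := (Finset.range n).filter (fun k => t (k+1) < f ω) with hSdef
      have hjn : S.card ≤ n := by
        calc S.card ≤ (Finset.range n).card := Finset.card_le_card (Finset.filter_subset _ _)
          _ = n := Finset.card_range n
      rcases eq_or_lt_of_le hjn with hjeq | hjlt
      · have hc : (S.card : ℝ) * δ = 2 * M' := by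
          rw [hjeq, hδ]; field_simp
        nlinarith [hb.2, hδpos]
      · have h10 : ¬ t (S.card + 1) < f ω := by
          intro hcon
          have hsub : Finset.range (S.card + 1) ⊆ S := by
            intro k hk
            rw [Finset.mem_range] at hk
            refine Finset.mem_filter.mpr ⟨Finset.mem_range.mpr ?_, ?_⟩
            · omega
            · exact lt_of_le_of_lt (htmono (by omega : k + 1 ≤ S.card + 1)) hcon
          have := Finset.card_le_card hsub
          simp only [Finset.card_range] at this
          omega
        push_neg at h10
        have h11 : t (S.card + 1) = -M' + ((S.card:ℝ)+1) * δ := by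
          simp only [htdef]; push_cast; ring
        rw [h11] at h10
        linarith
    have hone1 : φ (f + M' • onE P₀ MeasurableSet.univ) = φ f + M' := by
      rw [hadd, hsmul, hone, mul_one]
    have honeδ : φ (g + δ • onE P₀ MeasurableSet.univ) = φ g + δ := by
      rw [hadd g (δ • onE P₀ MeasurableSet.univ), hsmul δ (onE P₀ MeasurableSet.univ), hone,
        mul_one]
    have e1 : φ g ≤ φ f + M' := by
      rw [← hone1]
      refine phi_mono φ hadd hsmul hpos ?_
      filter_upwards [hlow, Lp.coeFn_add f (M' • onE P₀ MeasurableSet.univ),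
        Lp.coeFn_smul M' (onE P₀ MeasurableSet.univ), onE_univ_coe (P₀ := P₀)]
        with ω hω hω1 hω2 hω3
      rw [hω1, Pi.add_apply, hω2, Pi.smul_apply, hω3]
      simpa using hω
    have e2 : φ f + M' ≤ φ g + δ := by
      rw [← hone1, ← honeδ]
      refine phi_mono φ hadd hsmul hpos ?_
      filter_upwards [hhigh, Lp.coeFn_add f (M' • onE P₀ MeasurableSet.univ),
        Lp.coeFn_smul M' (onE P₀ MeasurableSet.univ),
        Lp.coeFn_add g (δ • onE P₀ MeasurableSet.univ),
        Lp.coeFn_smul δ (onE P₀ MeasurableSet.univ), onE_univ_coe (P₀ := P₀)]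
        with ω hω hω1 hω2 hω3 hω4 hω5
      rw [hω1, Pi.add_apply, hω2, Pi.smul_apply, hω5, hω3, Pi.add_apply, hω4, Pi.smul_apply, hω5]
      simpa using hω
    have hint : ∫ u in (-M')..M', F u = ∑ k ∈ Finset.range n, ∫ u in t k..t (k+1), F u := by
      rw [intervalIntegral.sum_integral_adjacent_intervals (fun k _ => hFint _ _), ht0, htn]
    have hup : ∀ k : ℕ, ∫ u in t k..t (k+1), F u ≤ δ * F (t k) := by
      intro k
      have hk : t k ≤ t (k+1) := htmono (Nat.le_succ k)
      have h := intervalIntegral.integral_mono_on hk (hFint _ _) intervalIntegrable_const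
        (fun x hx => hFanti hx.1)
      have hd : t (k+1) - t k = δ := by rw [hstep]; ring
      rw [intervalIntegral.integral_const, hd, smul_eq_mul] at h
      exact h
    have hlo2 : ∀ k : ℕ, δ * F (t (k+1)) ≤ ∫ u in t k..t (k+1), F u := by
      intro k
      have hk : t k ≤ t (k+1) := htmono (Nat.le_succ k)
      have h := intervalIntegral.integral_mono_on hk intervalIntegrable_const (hFint _ _)
        (fun x hx => hFanti hx.2)
      have hd : t (k+1) - t k = δ := by rw [hstep]; ring
      rw [intervalIntegral.integral_const, hd, smul_eq_mul] at h
      exact h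
    have hsum_up : ∫ u in (-M')..M', F u ≤ ∑ k ∈ Finset.range n, δ * F (t k) := by
      rw [hint]
      exact Finset.sum_le_sum (fun k _ => hup k)
    have hsum_lo : δ * ∑ k ∈ Finset.range n, F (t (k+1)) ≤ ∫ u in (-M')..M', F u := by
      rw [hint, Finset.mul_sum]
      exact Finset.sum_le_sum (fun k _ => hlo2 k)
    have htel : ∑ k ∈ Finset.range n, δ * F (t k)
        ≤ δ * (∑ k ∈ Finset.range n, F (t (k+1))) + δ := by
      have h11 : ∑ k ∈ Finset.range n, (F (t k) - F (t (k+1))) = F (t 0) - F (t n) :=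
        Finset.sum_range_sub' (fun k => F (t k)) n
      rw [Finset.sum_sub_distrib] at h11
      have h12 : F (t 0) - F (t n) ≤ 1 := by
        have := hF1 (t 0); have := hF0 (t n); linarith
      rw [← Finset.mul_sum]
      have h13 : ∑ k ∈ Finset.range n, F (t k)
          ≤ (∑ k ∈ Finset.range n, F (t (k+1))) + 1 := by linarith
      calc δ * ∑ k ∈ Finset.range n, F (t k)
          ≤ δ * ((∑ k ∈ Finset.range n, F (t (k+1))) + 1) :=
            mul_le_mul_of_nonneg_left h13 hδpos.le
        _ = δ * (∑ k ∈ Finset.range n, F (t (k+1))) + δ := by ring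
    rw [hφg] at e1 e2
    have hcomb : ∫ u in (-M')..M', F u ≤ δ * (∑ k ∈ Finset.range n, F (t (k+1))) + δ :=
      le_trans hsum_up htel
    rw [abs_le]
    exact ⟨by linarith, by linarith [hsum_lo]⟩
  have hconc : φ f + M' = ∫ u in (-M')..M', F u := by
    by_contra hne
    set D := φ f + M' - ∫ u in (-M')..M', F u with hD
    have habs : 0 < |D| := abs_pos.mpr (sub_ne_zero.mpr hne)
    obtain ⟨n, hn⟩ := exists_nat_gt (2 * M' / |D|)
    have hn1 : 1 ≤ n := by
      rcases Nat.eq_zero_or_pos n with h | h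
      · exfalso
        rw [h] at hn
        have : (0:ℝ) < 2 * M' / |D| := by positivity
        simp at hn
        linarith
      · exact h
    have hnpos : (0:ℝ) < n := by exact_mod_cast hn1
    rw [div_lt_iff₀ habs] at hn
    have hlt : 2 * M' / n < |D| := by
      rw [div_lt_iff₀ hnpos]
      nlinarith
    linarith [key n hn1]
  have final : FAP.faIntegral (Pm φ) ⇑f
      = (∫ u in Ioi (0:ℝ), F u) - ∫ u in Iio (0:ℝ), (1 - F u) := rfl
  rw [final, h1, h2, h3]
  linarith [h4, hconc]
end Core
end Stmt19Aux
open Stmt19Aux in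
set_option maxHeartbeats 2000000 in
/-- if P₀ is atomic and the norm closure of L - L∞⁺ meets L∞⁺ only
in 0, then an equivalent martingale finitely additive probability exists. -/
theorem stmt19 {Ω : Type*} [MeasurableSpace Ω] (P₀ : Measure Ω) [IsProbabilityMeasure P₀]
    (A : ℕ → Set Ω) (hAm : ∀ n, MeasurableSet (A n))
    (hAdisj : Pairwise (Function.onFun Disjoint A)) (hAcover : (⋃ n, A n) = univ)
    (hatom : ∀ n, 0 < P₀ (A n) ∧
      ∀ B : Set Ω, MeasurableSet B → P₀ (B ∩ A n) = 0 ∨ P₀ (B ∩ A n) = P₀ (A n))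
    (L : Submodule ℝ (Lp ℝ ⊤ P₀))
    (hclos : closure {g : Lp ℝ ⊤ P₀ | ∃ X ∈ L, ∃ Z : Lp ℝ ⊤ P₀,
        (∀ᵐ ω ∂P₀, 0 ≤ Z ω) ∧ g = X - Z} ∩
      {f : Lp ℝ ⊤ P₀ | ∀ᵐ ω ∂P₀, 0 ≤ f ω} = {0}) :
    ∃ P : Set Ω → ℝ, FAP.IsFAPm P ∧ FAP.EquivP P P₀ ∧
      ∀ f ∈ L, FAP.faIntegral P (f : Ω → ℝ) = 0 := by
  classical
  set S : Set (Lp ℝ ⊤ P₀) := {g : Lp ℝ ⊤ P₀ | ∃ X ∈ L, ∃ Z : Lp ℝ ⊤ P₀,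
      (∀ᵐ ω ∂P₀, 0 ≤ Z ω) ∧ g = X - Z} with hSdef
  have hz : ∀ᵐ ω ∂P₀, 0 ≤ (0 : Lp ℝ ⊤ P₀) ω := by
    filter_upwards [Lp.coeFn_zero ℝ ⊤ P₀] with ω hω
    simp [hω]
  have h0S : (0 : Lp ℝ ⊤ P₀) ∈ S := ⟨0, L.zero_mem, 0, hz, by simp⟩
  have hXS : ∀ X ∈ L, X ∈ S := fun X hX => ⟨X, hX, 0, hz, (sub_zero X).symm⟩
  have hnegS : ∀ Z : Lp ℝ ⊤ P₀, (∀ᵐ ω ∂P₀, 0 ≤ Z ω) → -Z ∈ S :=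
    fun Z hZ => ⟨0, L.zero_mem, Z, hZ, by simp⟩
  have hSsmul : ∀ s : ℝ, 0 ≤ s → ∀ c ∈ S, s • c ∈ S := by
    rintro s hs c ⟨X, hX, Z, hZ, rfl⟩
    refine ⟨s • X, L.smul_mem s hX, s • Z, ?_, by rw [smul_sub]⟩
    filter_upwards [hZ, Lp.coeFn_smul s Z] with ω h1 h2
    rw [h2, Pi.smul_apply, smul_eq_mul]
    exact mul_nonneg hs h1
  have hSconv : Convex ℝ S := by
    rintro c1 ⟨X1, hX1, Z1, hZ1, rfl⟩ c2 ⟨X2, hX2, Z2, hZ2, rfl⟩ a b ha hb hab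
    refine ⟨a • X1 + b • X2, L.add_mem (L.smul_mem a hX1) (L.smul_mem b hX2),
      a • Z1 + b • Z2, ?_, by rw [smul_sub, smul_sub]; abel⟩
    filter_upwards [hZ1, hZ2, Lp.coeFn_add (a • Z1) (b • Z2), Lp.coeFn_smul a Z1,
      Lp.coeFn_smul b Z2] with ω h1 h2 h3 h4 h5
    rw [h3, Pi.add_apply, h4, h5, Pi.smul_apply, Pi.smul_apply, smul_eq_mul, smul_eq_mul]
    exact add_nonneg (mul_nonneg ha h1) (mul_nonneg hb h2)
  have hCsmul : ∀ s : ℝ, 0 < s → ∀ c ∈ closure S, s • c ∈ closure S := by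
    intro s hs c hc
    exact map_mem_closure (continuous_const_smul s) hc (fun y hy => hSsmul s hs.le y hy)
  -- per-atom separation
  have hsep : ∀ n : ℕ, ∃ ψ : Lp ℝ ⊤ P₀ → ℝ,
      (∀ a b, ψ (a + b) = ψ a + ψ b) ∧ (∀ (c : ℝ) a, ψ (c • a) = c * ψ a) ∧
      (∀ a, (∀ᵐ ω ∂P₀, 0 ≤ a ω) → 0 ≤ ψ a) ∧ ψ (onE P₀ MeasurableSet.univ) = 1 ∧
      (∀ X ∈ L, ψ X = 0) ∧ 0 < ψ (onE P₀ (hAm n)) := by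
    intro n
    have hnotin : onE P₀ (hAm n) ∉ closure S := by
      intro hmem
      have hpos' : onE P₀ (hAm n) ∈ {f : Lp ℝ ⊤ P₀ | ∀ᵐ ω ∂P₀, 0 ≤ f ω} :=
        onE_nonneg P₀ (hAm n)
      have : onE P₀ (hAm n) ∈ ({0} : Set (Lp ℝ ⊤ P₀)) := by
        rw [← hclos]; exact ⟨hmem, hpos'⟩
      rw [mem_singleton_iff] at this
      have hnull : P₀ (A n) = 0 := by
        have hcoe : (A n).indicator (fun _ => (1:ℝ)) =ᵐ[P₀] 0 := by
          refine ((onE_coe P₀ (hAm n)).symm.trans ?_)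
          rw [this]
          exact Lp.coeFn_zero ℝ ⊤ P₀
        have hae : ∀ᵐ ω ∂P₀, ω ∉ A n := by
          filter_upwards [hcoe] with ω hω
          intro hmem
          rw [Set.indicator_of_mem hmem] at hω
          simp at hω
        refine measure_mono_null (fun ω hω => ?_) (ae_iff.mp hae)
        simpa using hω
      exact absurd hnull (ne_of_gt (hatom n).1)
    obtain ⟨ℓ, u, hu1, hu2⟩ :=
      geometric_hahn_banach_closed_point hSconv.closure isClosed_closure hnotin
    have hℓC : ∀ c ∈ closure S, ℓ c ≤ 0 := by
      intro c hc
      by_contra hpos'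
      push_neg at hpos'
      have hu0 : 0 < u := by
        have := hu1 0 (subset_closure h0S)
        simpa using this
      set s : ℝ := (u + 1) / ℓ c with hs
      have hspos : 0 < s := div_pos (by linarith) hpos'
      have := hu1 (s • c) (hCsmul s hspos c hc)
      rw [ℓ.map_smul, smul_eq_mul, hs, div_mul_cancel₀ _ (ne_of_gt hpos')] at this
      linarith
    have hℓpos : ∀ a : Lp ℝ ⊤ P₀, (∀ᵐ ω ∂P₀, 0 ≤ a ω) → 0 ≤ ℓ a := by
      intro a ha
      have := hℓC (-a) (subset_closure (hnegS a ha))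
      rw [ℓ.map_neg] at this
      linarith
    have hu0 : 0 < u := by
      have := hu1 0 (subset_closure h0S)
      simpa using this
    have hAn_pos : 0 < ℓ (onE P₀ (hAm n)) := lt_trans hu0 hu2
    have hb : 0 < ℓ (onE P₀ MeasurableSet.univ) := by
      have hcompl : 0 ≤ ℓ (onE P₀ (hAm n).compl) := hℓpos _ (onE_nonneg P₀ _)
      have := onE_compl P₀ (hAm n)
      calc (0:ℝ) < ℓ (onE P₀ (hAm n)) := hAn_pos
        _ ≤ ℓ (onE P₀ (hAm n)) + ℓ (onE P₀ (hAm n).compl) := by linarith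
        _ = ℓ (onE P₀ MeasurableSet.univ) := by rw [← ℓ.map_add, this]
    refine ⟨fun a => ℓ a / ℓ (onE P₀ MeasurableSet.univ), ?_, ?_, ?_, ?_, ?_, ?_⟩
    · intro a b
      show ℓ (a + b) / ℓ (onE P₀ MeasurableSet.univ) = _
      rw [ℓ.map_add, add_div]
    · intro c a
      show ℓ (c • a) / ℓ (onE P₀ MeasurableSet.univ) = _
      rw [ℓ.map_smul, smul_eq_mul, mul_div_assoc]
    · intro a ha; exact div_nonneg (hℓpos a ha) hb.le
    · exact div_self (ne_of_gt hb)
    · intro X hX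
      have h1 := hℓC X (subset_closure (hXS X hX))
      have h2 := hℓC (-X) (subset_closure (hXS (-X) (L.neg_mem hX)))
      rw [ℓ.map_neg] at h2
      have h3 : ℓ X = 0 := le_antisymm h1 (by linarith)
      show ℓ X / ℓ (onE P₀ MeasurableSet.univ) = 0
      rw [h3, zero_div]
    · exact div_pos hAn_pos hb
  choose ψ hψadd hψsmul hψpos hψone hψL hψA using hsep
  set c : ℕ → ℝ := fun n => (1/2:ℝ)^n * (1/2) with hc
  have hcpos : ∀ n, 0 < c n := fun n => by positivity
  have hcsum : Summable c := by
    refine Summable.mul_right _ ?_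
    exact summable_geometric_of_lt_one (by norm_num) (by norm_num)
  have habs : ∀ n a, |ψ n a| ≤ ‖a‖ := fun n a =>
    phi_abs_le (ψ n) (hψadd n) (hψsmul n) (hψpos n) (hψone n) a
  have hsummable : ∀ a : Lp ℝ ⊤ P₀, Summable (fun n => c n * ψ n a) := by
    intro a
    refine Summable.of_norm ?_
    refine Summable.of_nonneg_of_le (fun n => norm_nonneg _) (fun n => ?_) (hcsum.mul_right ‖a‖)
    rw [Real.norm_eq_abs, abs_mul, abs_of_nonneg (hcpos n).le]
    exact mul_le_mul_of_nonneg_left (habs n a) (hcpos n).le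
  set φ : Lp ℝ ⊤ P₀ → ℝ := fun a => ∑' n, c n * ψ n a with hφ
  have hφadd : ∀ a b, φ (a + b) = φ a + φ b := by
    intro a b
    rw [hφ]
    simp only
    have he : ∀ n, c n * ψ n (a + b) = c n * ψ n a + c n * ψ n b := by
      intro n; rw [hψadd n, mul_add]
    rw [tsum_congr he, Summable.tsum_add (hsummable a) (hsummable b)]
  have hφsmul : ∀ (r : ℝ) a, φ (r • a) = r * φ a := by
    intro r a
    rw [hφ]
    simp only
    have he : ∀ n, c n * ψ n (r • a) = r * (c n * ψ n a) := by
      intro n; rw [hψsmul n]; ring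
    rw [tsum_congr he, tsum_mul_left]
  have hφpos : ∀ a, (∀ᵐ ω ∂P₀, 0 ≤ a ω) → 0 ≤ φ a := by
    intro a ha
    exact tsum_nonneg (fun n => mul_nonneg (hcpos n).le (hψpos n a ha))
  have hgeom : ∑' n : ℕ, ((1/2:ℝ)^n * (1/2)) = 1 := by
    rw [tsum_mul_right, tsum_geometric_of_lt_one (by norm_num) (by norm_num)]
    norm_num
  have hφone : φ (onE P₀ MeasurableSet.univ) = 1 := by
    rw [hφ]
    simp only
    have he : ∀ n, c n * ψ n (onE P₀ MeasurableSet.univ) = (1/2:ℝ)^n * (1/2) := by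
      intro n; rw [hψone n, mul_one, hc]
    rw [tsum_congr he, hgeom]
  have hφL : ∀ f ∈ L, φ f = 0 := by
    intro f hf
    rw [hφ]
    simp only
    have he : ∀ n, c n * ψ n f = 0 := fun n => by rw [hψL n f hf, mul_zero]
    rw [tsum_congr he, tsum_zero]
  have hφlow : ∀ (n : ℕ) (B : Set Ω) (hB : MeasurableSet B),
      c n * ψ n (onE P₀ hB) ≤ φ (onE P₀ hB) :=
    fun n B hB => Summable.le_tsum (hsummable _) n
      (fun m _ => mul_nonneg (hcpos m).le (hψpos m _ (onE_nonneg P₀ hB)))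
  refine ⟨Pm φ, ⟨?_, ?_, ?_⟩, ?_, ?_⟩
  · rw [Pm_meas φ MeasurableSet.univ]
    exact hφone
  · intro B hB
    rw [Pm_meas φ hB]
    exact hφpos _ (onE_nonneg P₀ hB)
  · intro B C hB hC hBC
    rw [Pm_meas φ (hB.union hC), Pm_meas φ hB, Pm_meas φ hC, onE_union P₀ hB hC hBC, hφadd]
  · intro B hB
    constructor
    · intro hPB
      by_contra hP0
      have hU : B = ⋃ n, B ∩ A n := by
        rw [← inter_iUnion, hAcover, inter_univ]
      have hex : ∃ n, P₀ (B ∩ A n) ≠ 0 := by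
        by_contra hall
        push_neg at hall
        exact hP0 (by rw [hU]; exact measure_iUnion_null hall)
      obtain ⟨n, hn⟩ := hex
      have hBA : P₀ (B ∩ A n) = P₀ (A n) := ((hatom n).2 B hB).resolve_left hn
      have hdiff : P₀ (A n \ (B ∩ A n)) = 0 := by
        rw [measure_diff inter_subset_right (hB.inter (hAm n)).nullMeasurableSet
          (measure_ne_top P₀ _), hBA, tsub_self]
      have haeeq : (B ∩ A n : Set Ω) =ᵐ[P₀] (A n : Set Ω) := by
        rw [ae_eq_set]
        refine ⟨?_, hdiff⟩
        rw [Set.diff_eq_empty.mpr inter_subset_right]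
        exact measure_empty
      have heq : onE P₀ (hB.inter (hAm n)) = onE P₀ (hAm n) := onE_ae_eq P₀ _ _ haeeq
      have hmono : ψ n (onE P₀ (hB.inter (hAm n))) ≤ ψ n (onE P₀ hB) := by
        refine phi_mono (ψ n) (hψadd n) (hψsmul n) (hψpos n) ?_
        filter_upwards [onE_coe P₀ (hB.inter (hAm n)), onE_coe P₀ hB] with ω h1 h2
        rw [h1, h2]
        exact Set.indicator_le_indicator_of_subset inter_subset_left (fun _ => zero_le_one) ω
      have hgt : 0 < φ (onE P₀ hB) := by
        calc (0:ℝ) < c n * ψ n (onE P₀ (hAm n)) := mul_pos (hcpos n) (hψA n)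
          _ = c n * ψ n (onE P₀ (hB.inter (hAm n))) := by rw [heq]
          _ ≤ c n * ψ n (onE P₀ hB) := mul_le_mul_of_nonneg_left hmono (hcpos n).le
          _ ≤ φ (onE P₀ hB) := hφlow n B hB
      rw [Pm_meas φ hB] at hPB
      linarith
    · intro h0
      rw [Pm_meas φ hB, onE_null P₀ hB h0, phi_zero φ hφsmul]
  · intro f hf
    rw [faIntegral_eq φ hφadd hφsmul hφpos hφone f, hφL f hf]
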